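/- Let α, β ∈ ℕ with α, β > 1 be multiplicatively independent, let l ≥ 2, let z₁,…,z_l ∈ {α, β} with z₁ = α and z₂ = β, let c₁,…,c_l be non-zero integers, and let d ∈ ℤ. Let S be the set of all (n₁,…,n_l) ∈ ℕ^l satisfying: (a) c₁·z₁^{n₁} + ⋯ + c_l·z_l^{n_l} = d; (b) z₁^{n₁} ≥ z₃^{n₃}, z₂^{n₂} ≥ z₃^{n₃}, and z₃^{n₃} ≥ z₄^{n₄} ≥ ⋯ ≥ z_l^{n_l}; (c) for every non-empty proper subset I of {1,…,l}, the sub-sum Σ_{i∈I} c_i·z_i^{n_i} is non-zero. Then there exist rational numbers ξ₁ and ξ₂ such that for every (n₁,…,n_l) ∈ S, both n₁ ≥ (log β / log α)·n₂ − ξ₁ and n₂ ≥ (log α / log β)·n₁ − ξ₂ hold. -/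
import Mathlib

private lemma aux_log_bound (a b : ℕ) (ha : 1 < a) (hb : 1 < b) (K : ℤ) (hK : 1 ≤ K)
    (m p : ℕ) (h : (b : ℤ) ^ p ≤ K * (a : ℤ) ^ m) :
    (m : ℝ) ≥ (Real.log b / Real.log a) * p - ((2 * K : ℤ) : ℝ) := by
  have hla : 0 < Real.log a := Real.log_pos (by exact_mod_cast ha)
  have hlb : 0 < Real.log b := Real.log_pos (by exact_mod_cast hb)
  have hKR : (1 : ℝ) ≤ (K : ℝ) := by exact_mod_cast hK
  have hR : (b : ℝ) ^ p ≤ (K : ℝ) * (a : ℝ) ^ m := by exact_mod_cast h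
  have hbpos : (0 : ℝ) < (b : ℝ) ^ p := by positivity
  have hapos : (0 : ℝ) < (a : ℝ) ^ m := by positivity
  have hlog : (p : ℝ) * Real.log b ≤ Real.log K + (m : ℝ) * Real.log a := by
    have h1 := Real.log_le_log hbpos hR
    rw [Real.log_mul (by linarith) (ne_of_gt hapos), Real.log_pow, Real.log_pow] at h1
    push_cast at h1 ⊢
    linarith
  have hlogK : Real.log K ≤ 2 * (K : ℝ) * Real.log a := by
    have h1 : Real.log K ≤ (K : ℝ) := Real.log_le_self (by linarith)
    have h2 : Real.log 2 ≤ Real.log a := by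
      apply Real.log_le_log (by norm_num)
      exact_mod_cast ha
    have h3 : (0.6931471803 : ℝ) < Real.log 2 := Real.log_two_gt_d9
    nlinarith
  rw [ge_iff_le, sub_le_iff_le_add, div_mul_eq_mul_div, div_le_iff₀ hla]
  push_cast
  nlinarith

/-- Let `α, β > 1` be multiplicatively independent, `l ≥ 2`, `z₁,…,z_l ∈ {α, β}` with
`z₁ = α`, `z₂ = β`, `c₁,…,c_l` non-zero integers and `d ∈ ℤ`. Let `S` be the set of
`(n₁,…,n_l) ∈ ℕ^l` with (a) `c₁·z₁^{n₁} + ⋯ + c_l·z_l^{n_l} = d`,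
(b) `z₁^{n₁}, z₂^{n₂} ≥ z₃^{n₃} ≥ ⋯ ≥ z_l^{n_l}`, and (c) no proper non-empty sub-sum of the
left-hand side of (a) vanishes. Then there are rationals `ξ₁, ξ₂` such that every solution in
`S` satisfies `n₁ ≥ (log β / log α)·n₂ − ξ₁` and `n₂ ≥ (log α / log β)·n₁ − ξ₂`. -/
theorem exponents_almost_proportional (α β : ℕ) (hα : 1 < α) (hβ : 1 < β)
    (hind : ∀ n₁ n₂ : ℕ, α ^ n₁ = β ^ n₂ → n₁ = 0 ∧ n₂ = 0)
    (l : ℕ) (hl : 2 ≤ l) (z : Fin l → ℕ) (hz : ∀ i, z i = α ∨ z i = β)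
    (hz1 : z ⟨0, by omega⟩ = α) (hz2 : z ⟨1, by omega⟩ = β)
    (c : Fin l → ℤ) (hc : ∀ i, c i ≠ 0) (d : ℤ)
    (S : Set (Fin l → ℕ))
    (hS : S = {n : Fin l → ℕ |
      (∑ i, c i * (z i : ℤ) ^ (n i)) = d ∧
      (∀ j : Fin l, (j : ℕ) = 2 →
        z j ^ n j ≤ z ⟨0, by omega⟩ ^ n ⟨0, by omega⟩ ∧
        z j ^ n j ≤ z ⟨1, by omega⟩ ^ n ⟨1, by omega⟩) ∧
      (∀ i j : Fin l, 2 ≤ (i : ℕ) → (j : ℕ) = (i : ℕ) + 1 → z j ^ n j ≤ z i ^ n i) ∧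
      (∀ I : Finset (Fin l), I.Nonempty → I ≠ Finset.univ →
        (∑ i ∈ I, c i * (z i : ℤ) ^ (n i)) ≠ 0)}) :
    ∃ ξ₁ ξ₂ : ℚ, ∀ n ∈ S,
      ((n ⟨0, by omega⟩ : ℝ) ≥
        (Real.log β / Real.log α) * (n ⟨1, by omega⟩ : ℝ) - (ξ₁ : ℝ)) ∧
      ((n ⟨1, by omega⟩ : ℝ) ≥
        (Real.log α / Real.log β) * (n ⟨0, by omega⟩ : ℝ) - (ξ₂ : ℝ)) := by
  subst hS
  have h0l : 0 < l := by omega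
  have h1l : 1 < l := by omega
  have hcsum : (0:ℤ) < ∑ i, |c i| := by
    apply Finset.sum_pos
    · intro i _
      exact abs_pos.mpr (hc i)
    · exact Finset.univ_nonempty_iff.mpr ⟨⟨0, by omega⟩⟩
  set K : ℤ := |d| + ∑ i, |c i| with hKdef
  have hK1 : (1:ℤ) ≤ K := by
    have hd : (0:ℤ) ≤ |d| := abs_nonneg d
    omega
  refine ⟨((2 * K : ℤ) : ℚ), ((2 * K : ℤ) : ℚ), ?_⟩
  intro n hn
  obtain ⟨ha, hb, hchain, -⟩ := hn
  -- chain lemma: all terms with index ≥ 2 are dominated by both leading terms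
  have key : ∀ m : ℕ, (hm : m < l) → 2 ≤ m →
      z ⟨m, hm⟩ ^ n ⟨m, hm⟩ ≤ z ⟨0, h0l⟩ ^ n ⟨0, h0l⟩ ∧
      z ⟨m, hm⟩ ^ n ⟨m, hm⟩ ≤ z ⟨1, h1l⟩ ^ n ⟨1, h1l⟩ := by
    intro m
    induction m with
    | zero => omega
    | succ p ih =>
      intro hm h2
      rcases Nat.lt_or_ge p 2 with hp | hp
      · have hp1 : p = 1 := by omega
        subst hp1
        exact hb ⟨2, hm⟩ rfl
      · have hpl : p < l := by omega
        have step : z ⟨p + 1, hm⟩ ^ n ⟨p + 1, hm⟩ ≤ z ⟨p, hpl⟩ ^ n ⟨p, hpl⟩ :=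
          hchain ⟨p, hpl⟩ ⟨p + 1, hm⟩ hp rfl
        exact ⟨step.trans (ih hpl hp).1, step.trans (ih hpl hp).2⟩
  -- generic bound: the term at j is at most K times any bound M for all other terms
  have core : ∀ (j : Fin l) (M : ℤ), 1 ≤ M → (∀ i : Fin l, i ≠ j → (z i : ℤ) ^ n i ≤ M) →
      (z j : ℤ) ^ n j ≤ K * M := by
    intro j M hM hle
    have hsum := Finset.sum_erase_add Finset.univ (fun i => c i * (z i : ℤ) ^ n i)
      (Finset.mem_univ j)
    rw [ha] at hsum
    set s : ℤ := ∑ i ∈ Finset.univ.erase j, c i * (z i : ℤ) ^ n i with hs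
    have hsum' : s + c j * (z j : ℤ) ^ n j = d := hsum
    have hfj : c j * (z j : ℤ) ^ n j = d - s := by linarith
    have habs : |s| ≤ ∑ i ∈ Finset.univ.erase j, |c i| * M := by
      refine (Finset.abs_sum_le_sum_abs _ _).trans (Finset.sum_le_sum ?_)
      intro i hi
      rw [abs_mul, abs_of_nonneg (by positivity : (0:ℤ) ≤ (z i : ℤ) ^ n i)]
      exact mul_le_mul_of_nonneg_left (hle i (Finset.ne_of_mem_erase hi)) (abs_nonneg _)
    have hsub : ∑ i ∈ Finset.univ.erase j, |c i| * M ≤ ∑ i, |c i| * M := by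
      apply Finset.sum_le_sum_of_subset_of_nonneg (Finset.erase_subset _ _)
      intro i _ _
      exact mul_nonneg (abs_nonneg _) (by linarith)
    have hzjnn : (0:ℤ) ≤ (z j : ℤ) ^ n j := by positivity
    have h1 : (z j : ℤ) ^ n j ≤ |c j| * (z j : ℤ) ^ n j :=
      le_mul_of_one_le_left hzjnn (Int.one_le_abs (hc j))
    have h2 : |c j * (z j : ℤ) ^ n j| ≤ |d| + |s| := by
      rw [hfj]
      calc |d - s| = |d + (-s)| := by ring_nf
        _ ≤ |d| + |(-s)| := abs_add_le _ _
        _ = |d| + |s| := by rw [abs_neg]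
    have hdM : |d| ≤ |d| * M := le_mul_of_one_le_right (abs_nonneg d) hM
    have hsm : ∑ i, |c i| * M = (∑ i, |c i|) * M := (Finset.sum_mul _ _ _).symm
    have h3 : |c j * (z j : ℤ) ^ n j| = |c j| * (z j : ℤ) ^ n j := by
      rw [abs_mul, abs_of_nonneg hzjnn]
    have : (z j : ℤ) ^ n j ≤ |d| * M + (∑ i, |c i|) * M := by
      rw [← hsm]
      linarith
    calc (z j : ℤ) ^ n j ≤ |d| * M + (∑ i, |c i|) * M := this
      _ = K * M := by rw [hKdef]; ring
  have hA1 : (1:ℤ) ≤ (α : ℤ) ^ n ⟨0, h0l⟩ := by exact_mod_cast Nat.one_le_pow _ _ (by omega)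
  have hB1 : (1:ℤ) ≤ (β : ℤ) ^ n ⟨1, h1l⟩ := by exact_mod_cast Nat.one_le_pow _ _ (by omega)
  have hle1 : ∀ i : Fin l, i ≠ ⟨1, h1l⟩ → (z i : ℤ) ^ n i ≤ (α : ℤ) ^ n ⟨0, h0l⟩ := by
    intro i hi
    rcases Nat.lt_or_ge (i : ℕ) 2 with h | h
    · have h0 : (i : ℕ) = 0 := by
        have : (i : ℕ) ≠ 1 := fun h' => hi (Fin.ext h')
        omega
      have hie : i = ⟨0, h0l⟩ := Fin.ext h0
      subst hie
      rw [show z (⟨0, h0l⟩ : Fin l) = α from hz1]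
    · have hk := (key (i : ℕ) i.isLt h).1
      rw [Fin.eta] at hk
      rw [show z (⟨0, h0l⟩ : Fin l) = α from hz1] at hk
      exact_mod_cast hk
  have hle2 : ∀ i : Fin l, i ≠ ⟨0, h0l⟩ → (z i : ℤ) ^ n i ≤ (β : ℤ) ^ n ⟨1, h1l⟩ := by
    intro i hi
    rcases Nat.lt_or_ge (i : ℕ) 2 with h | h
    · have h0 : (i : ℕ) = 1 := by
        have : (i : ℕ) ≠ 0 := fun h' => hi (Fin.ext h')
        omega
      have hie : i = ⟨1, h1l⟩ := Fin.ext h0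
      subst hie
      rw [show z (⟨1, h1l⟩ : Fin l) = β from hz2]
    · have hk := (key (i : ℕ) i.isLt h).2
      rw [Fin.eta] at hk
      rw [show z (⟨1, h1l⟩ : Fin l) = β from hz2] at hk
      exact_mod_cast hk
  have hb1 : (β : ℤ) ^ n ⟨1, h1l⟩ ≤ K * (α : ℤ) ^ n ⟨0, h0l⟩ := by
    have := core ⟨1, h1l⟩ _ hA1 hle1
    rwa [show z (⟨1, h1l⟩ : Fin l) = β from hz2] at this
  have hb2 : (α : ℤ) ^ n ⟨0, h0l⟩ ≤ K * (β : ℤ) ^ n ⟨1, h1l⟩ := by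
    have := core ⟨0, h0l⟩ _ hB1 hle2
    rwa [show z (⟨0, h0l⟩ : Fin l) = α from hz1] at this
  have hcast : (((2 * K : ℤ) : ℚ) : ℝ) = ((2 * K : ℤ) : ℝ) := by push_cast; ring
  rw [hcast]
  exact ⟨aux_log_bound α β hα hβ K hK1 _ _ hb1, aux_log_bound β α hβ hα K hK1 _ _ hb2⟩
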